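/- arXiv:1412.7169 — 4 statements merged into one kernel-verified Lean document; each statement's English description precedes it below -/
import Mathlib

section
/- Let X be a Hausdorff locally compact non-discrete topological space containing a non-trivial convergent sequence, i.e., a sequence (x_n) converging to a point x_0 with x_n ≠ x_0 for all n. Then X is not an F-space. -/
open scoped BoundedContinuousFunction
open Filter Topology

/-- `X` is an F-space: every bounded continuous real-valued function `f` on `X` factors as
`f = k · |f|` for some bounded continuous function `k` on `X`. -/
def IsFSpace (X : Type*) [TopologicalSpace X] : Prop :=
  ∀ f : X →ᵇ ℝ, ∃ k : X →ᵇ ℝ, ∀ x : X, f x = k x * |f x|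

/-- A Hausdorff locally compact non-discrete space containing a non-trivial
convergent sequence is not an F-space. -/
theorem not_isFSpace_of_nontrivial_convergent_sequence
    {X : Type*} [TopologicalSpace X] [T2Space X] [LocallyCompactSpace X]
    (hnd : ¬ DiscreteTopology X)
    (x : ℕ → X) (x₀ : X) (hlim : Tendsto x atTop (𝓝 x₀)) (hne : ∀ n, x n ≠ x₀) :
    ¬ IsFSpace X := by
  classical
  -- Step 1: each fiber of `x` is finite.
  have hfib : ∀ m : ℕ, {n : ℕ | x n = x m}.Finite := by
    intro m
    by_contra h
    have hfreq : ∃ᶠ n in atTop, x n = x m :=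
      Nat.frequently_atTop_iff_infinite.mpr h
    obtain ⟨φ, hφ, hφP⟩ := Filter.extraction_of_frequently_atTop hfreq
    have h1 : Tendsto (x ∘ φ) atTop (𝓝 x₀) := hlim.comp hφ.tendsto_atTop
    have h2 : Tendsto (x ∘ φ) atTop (𝓝 (x m)) := by
      have : (x ∘ φ) = fun _ => x m := funext fun n => hφP n
      rw [this]; exact tendsto_const_nhds
    exact hne m (tendsto_nhds_unique h2 h1)
  -- Step 2: the set of indices hitting an initial segment of values is finite.
  have hIic : ∀ N : ℕ, {n : ℕ | x n ∈ x '' Set.Iic N}.Finite := by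
    intro N
    have : {n : ℕ | x n ∈ x '' Set.Iic N} = ⋃ m ∈ Set.Iic N, {n : ℕ | x n = x m} := by
      ext n
      simp only [Set.mem_setOf_eq, Set.mem_image, Set.mem_iUnion, Set.mem_Iic, exists_prop]
      constructor
      · rintro ⟨m, hm, hxm⟩; exact ⟨m, hm, hxm.symm⟩
      · rintro ⟨m, hm, hxm⟩; exact ⟨m, hm, hxm.symm⟩
    rw [this]
    exact (Set.finite_Iic N).biUnion fun m _ => hfib m
  -- Step 3: a "next index" function producing a fresh value.
  have hnext : ∀ N : ℕ, ∃ n : ℕ, N < n ∧ x n ∉ x '' Set.Iic N := by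
    intro N
    have hfin : ({n : ℕ | x n ∈ x '' Set.Iic N} ∪ Set.Iic N).Finite :=
      (hIic N).union (Set.finite_Iic N)
    obtain ⟨n, hn⟩ := hfin.infinite_compl.nonempty
    simp only [Set.mem_compl_iff, Set.mem_union, Set.mem_setOf_eq, Set.mem_Iic, not_or,
      not_le] at hn
    exact ⟨n, hn.2, hn.1⟩
  choose next hnext1 hnext2 using hnext
  -- Step 4: injective subsequence `y` converging to `x₀`.
  set φ : ℕ → ℕ := fun k => next^[k] 0 with hφdef
  have hφsucc : ∀ k, φ (k + 1) = next (φ k) := fun k => Function.iterate_succ_apply' next k 0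
  have hφmono : StrictMono φ := by
    apply strictMono_nat_of_lt_succ
    intro k
    rw [hφsucc]
    exact hnext1 (φ k)
  set y : ℕ → X := fun k => x (φ k) with hydef
  have hy_lim : Tendsto y atTop (𝓝 x₀) := hlim.comp hφmono.tendsto_atTop
  have hy_ne : ∀ k, y k ≠ x₀ := fun k => hne (φ k)
  have hy_lt : ∀ j k : ℕ, j < k → y j ≠ y k := by
    intro j k hjk
    obtain ⟨k, rfl⟩ : ∃ k', k = k' + 1 := ⟨k - 1, by omega⟩
    have h1 : x (φ (k + 1)) ∉ x '' Set.Iic (φ k) := by rw [hφsucc]; exact hnext2 (φ k)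
    have h2 : x (φ j) ∈ x '' Set.Iic (φ k) :=
      ⟨φ j, hφmono.monotone (by omega), rfl⟩
    intro heq
    have h2' : y j ∈ x '' Set.Iic (φ k) := h2
    rw [heq] at h2'
    exact h1 h2'
  have hy_inj : Function.Injective y := by
    intro a b hab
    rcases lt_trichotomy a b with h | h | h
    · exact absurd hab (hy_lt a b h)
    · exact h
    · exact absurd hab.symm (hy_lt b a h)
  -- Step 5: for each m, the set S m = {x₀} ∪ {y j : j ≠ m} is compact (and closed).
  set S : ℕ → Set X := fun m => insert x₀ (y '' {j | j ≠ m}) with hSdef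
  have hScompact : ∀ m, IsCompact (S m) := by
    intro m
    set ψ : ℕ → ℕ := fun j => if j < m then j else j + 1 with hψdef
    have hψmono : StrictMono ψ := by
      intro a b hab
      simp only [hψdef]
      split_ifs <;> omega
    have hψrange : Set.range ψ = {j | j ≠ m} := by
      ext j
      simp only [Set.mem_range, Set.mem_setOf_eq, hψdef]
      constructor
      · rintro ⟨i, rfl⟩; split_ifs <;> omega
      · intro hj
        refine ⟨if j < m then j else j - 1, ?_⟩
        split_ifs <;> omega
    have hcomp : Tendsto (y ∘ ψ) atTop (𝓝 x₀) := hy_lim.comp hψmono.tendsto_atTop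
    have := hcomp.isCompact_insert_range
    rwa [Set.range_comp, hψrange] at this
  have hSclosed : ∀ m, IsClosed (S m) := fun m => (hScompact m).isClosed
  have hySm : ∀ m, y m ∉ S m := by
    intro m hm
    rcases hm with hm | ⟨j, hj, hjy⟩
    · exact hy_ne m hm
    · exact hj (hy_inj hjy)
  -- Step 6: Urysohn bump functions g m with g m (y m) = 1, g m = 0 on S m, 0 ≤ g m ≤ 1.
  have hury : ∀ m : ℕ, ∃ g : C(X, ℝ), Set.EqOn g 1 {y m} ∧ Set.EqOn g 0 (S m) ∧
      HasCompactSupport g ∧ ∀ z, g z ∈ Set.Icc (0 : ℝ) 1 := by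
    intro m
    exact exists_continuous_one_zero_of_isCompact isCompact_singleton (hSclosed m)
      (Set.disjoint_singleton_left.mpr (hySm m))
  choose g hg1 hg0 hgcs hg01 using hury
  -- Step 7: bounded continuous versions.
  set h : ℕ → X →ᵇ ℝ := fun m =>
    BoundedContinuousFunction.ofNormedAddCommGroup (g m) (g m).continuous 1
      (fun z => by
        rw [Real.norm_eq_abs, abs_le]
        exact ⟨by linarith [(hg01 m z).1], (hg01 m z).2⟩) with hhdef
  have hhcoe : ∀ m z, h m z = g m z := fun m z => rfl
  have hhnorm : ∀ m, ‖h m‖ ≤ 1 := fun m =>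
    BoundedContinuousFunction.norm_ofNormedAddCommGroup_le _ zero_le_one
      (fun z => by
        rw [Real.norm_eq_abs, abs_le]
        exact ⟨by linarith [(hg01 m z).1], (hg01 m z).2⟩)
  -- Step 8: the series f = ∑ (-1/4)^m • h m.
  set c : ℕ → ℝ := fun m => (-(4 : ℝ)⁻¹) ^ m with hcdef
  have hcabs : ∀ m, |c m| = (4 : ℝ)⁻¹ ^ m := by
    intro m
    rw [hcdef, abs_pow, abs_neg, abs_of_nonneg (by norm_num : (0:ℝ) ≤ (4:ℝ)⁻¹)]
  set F : ℕ → X →ᵇ ℝ := fun m => c m • h m with hFdef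
  have hsum : Summable F := by
    apply Summable.of_norm
    apply Summable.of_nonneg_of_le (fun m => norm_nonneg _) (fun m => ?_)
      (summable_geometric_of_lt_one (by norm_num) (by norm_num : (4:ℝ)⁻¹ < 1))
    calc ‖F m‖ ≤ |c m| * ‖h m‖ := by
          simpa using norm_smul_le (c m) (h m)
      _ ≤ (4 : ℝ)⁻¹ ^ m * 1 := by
          rw [hcabs m]
          exact mul_le_mul_of_nonneg_left (hhnorm m) (by positivity)
      _ = (4 : ℝ)⁻¹ ^ m := mul_one _
  set f : X →ᵇ ℝ := ∑' m, F m with hfdef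
  -- Step 9: f (y n) = c n.
  have hfy : ∀ n, f (y n) = c n := by
    intro n
    have heval : f (y n) = ∑' m, F m (y n) :=
      (BoundedContinuousFunction.evalCLM (𝕜 := ℝ) (y n)).map_tsum hsum
    rw [heval]
    have hterm : ∀ m, m ≠ n → F m (y n) = 0 := by
      intro m hmn
      have hyS : y n ∈ S m := Set.mem_insert_iff.mpr (Or.inr ⟨n, fun h => hmn h.symm, rfl⟩)
      have : g m (y n) = 0 := hg0 m hyS
      simp [hFdef, hhcoe, this]
    rw [tsum_eq_single n hterm]
    have : g n (y n) = 1 := hg1 n rfl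
    simp [hFdef, hhcoe, this]
  -- Step 10: contradiction.
  intro hF
  obtain ⟨k, hk⟩ := hF f
  have hky : ∀ n, k (y n) = (-1 : ℝ) ^ n := by
    intro n
    have := hk (y n)
    rw [hfy n, hcabs n] at this
    have hc : c n = (-1 : ℝ) ^ n * (4 : ℝ)⁻¹ ^ n := by
      rw [hcdef, ← mul_pow]; norm_num
    rw [hc] at this
    have hpos : (4 : ℝ)⁻¹ ^ n ≠ 0 := by positivity
    field_simp at this
    linarith [this]
  have h2mono : StrictMono (fun n : ℕ => 2 * n) := by intro a b hab; dsimp only; omega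
  have h2mono' : StrictMono (fun n : ℕ => 2 * n + 1) := by intro a b hab; dsimp only; omega
  have hkx1 : k x₀ = 1 := by
    have hlim1 : Tendsto (fun n => k (y (2 * n))) atTop (𝓝 (k x₀)) :=
      (k.continuous.tendsto x₀).comp (hy_lim.comp h2mono.tendsto_atTop)
    have hval : (fun n => k (y (2 * n))) = fun _ => (1 : ℝ) := by
      funext n
      rw [hky (2 * n), pow_mul]
      norm_num
    rw [hval] at hlim1
    exact (tendsto_nhds_unique tendsto_const_nhds hlim1).symm
  have hkx2 : k x₀ = -1 := by
    have hlim1 : Tendsto (fun n => k (y (2 * n + 1))) atTop (𝓝 (k x₀)) :=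
      (k.continuous.tendsto x₀).comp (hy_lim.comp h2mono'.tendsto_atTop)
    have hval : (fun n => k (y (2 * n + 1))) = fun _ => (-1 : ℝ) := by
      funext n
      rw [hky (2 * n + 1), pow_succ, pow_mul]
      norm_num
    rw [hval] at hlim1
    exact (tendsto_nhds_unique tendsto_const_nhds hlim1).symm
  rw [hkx1] at hkx2
  norm_num at hkx2
end

section
/- Let X be a compact Hausdorff space. Then X is an F-space if and only if for all σ-compact subsets A and B of X, the conditions cl(A) ∩ B = ∅ and A ∩ cl(B) = ∅ together imply cl(A) ∩ cl(B) = ∅. -/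
open scoped BoundedContinuousFunction
open Filter Topology

private lemma aux_sign_pos {r c : ℝ} (h : r = c * |r|) (hr : 0 < r) : c = 1 := by
  rw [abs_of_pos hr] at h
  have h2 : (c - 1) * r = 0 := by ring_nf; linarith
  rcases mul_eq_zero.mp h2 with h3 | h3
  · linarith
  · exact absurd h3 hr.ne'

private lemma aux_sign_neg {r c : ℝ} (h : r = c * |r|) (hr : r < 0) : c = -1 := by
  rw [abs_of_neg hr] at h
  have h2 : (c + 1) * r = 0 := by ring_nf; linarith
  rcases mul_eq_zero.mp h2 with h3 | h3
  · linarith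
  · exact absurd h3 hr.ne

/-- A compact Hausdorff space is an F-space iff for all σ-compact subsets
`A`, `B`, if `cl A ∩ B = ∅` and `A ∩ cl B = ∅` then `cl A ∩ cl B = ∅`. -/
theorem isFSpace_iff_sigmaCompact_separation
    {X : Type*} [TopologicalSpace X] [CompactSpace X] [T2Space X] :
    IsFSpace X ↔
      ∀ A B : Set X, IsSigmaCompact A → IsSigmaCompact B →
        closure A ∩ B = ∅ → A ∩ closure B = ∅ → closure A ∩ closure B = ∅ := by
  constructor
  · intro hF A B hA hB hclAB hAclB
    obtain ⟨K, hKc, hKU⟩ := hA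
    obtain ⟨L, hLc, hLU⟩ := hB
    have hKA : ∀ n, K n ⊆ A := fun n => hKU ▸ Set.subset_iUnion K n
    have hLB : ∀ n, L n ⊆ B := fun n => hLU ▸ Set.subset_iUnion L n
    -- Urysohn functions for each compact piece
    have hgex : ∀ n, ∃ g : C(X, ℝ), Set.EqOn g 0 (closure B) ∧ Set.EqOn g 1 (K n) ∧
        ∀ x, g x ∈ Set.Icc (0 : ℝ) 1 := by
      intro n
      refine exists_continuous_zero_one_of_isClosed isClosed_closure (hKc n).isClosed ?_
      rw [Set.disjoint_left]
      intro x hx hxK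
      have : x ∈ A ∩ closure B := ⟨hKA n hxK, hx⟩
      rw [hAclB] at this
      exact this
    have hhex : ∀ n, ∃ h : C(X, ℝ), Set.EqOn h 0 (closure A) ∧ Set.EqOn h 1 (L n) ∧
        ∀ x, h x ∈ Set.Icc (0 : ℝ) 1 := by
      intro n
      refine exists_continuous_zero_one_of_isClosed isClosed_closure (hLc n).isClosed ?_
      rw [Set.disjoint_left]
      intro x hx hxL
      have : x ∈ closure A ∩ B := ⟨hx, hLB n hxL⟩
      rw [hclAB] at this
      exact this
    choose g hg0 hg1 hg01 using hgex
    choose h hh0 hh1 hh01 using hhex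
    set G : ℕ → (X →ᵇ ℝ) := fun n => ((1 / 2 : ℝ) ^ n) • BoundedContinuousFunction.mkOfCompact (g n) with hGdef
    set H : ℕ → (X →ᵇ ℝ) := fun n => ((1 / 2 : ℝ) ^ n) • BoundedContinuousFunction.mkOfCompact (h n) with hHdef
    have hGnx : ∀ n x, G n x = (1 / 2 : ℝ) ^ n * g n x := by
      intro n x; rw [hGdef]; simp
    have hHnx : ∀ n x, H n x = (1 / 2 : ℝ) ^ n * h n x := by
      intro n x; rw [hHdef]; simp
    have hnormG : ∀ n, ‖G n‖ ≤ (1 / 2 : ℝ) ^ n := by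
      intro n
      refine (BoundedContinuousFunction.norm_le (by positivity)).mpr fun x => ?_
      rw [hGnx, Real.norm_eq_abs, abs_mul,
        abs_of_nonneg (by positivity : (0 : ℝ) ≤ (1 / 2 : ℝ) ^ n)]
      have habs : |g n x| ≤ 1 := abs_le.mpr ⟨by linarith [(hg01 n x).1], (hg01 n x).2⟩
      nlinarith [pow_nonneg (by norm_num : (0 : ℝ) ≤ 1 / 2) n]
    have hnormH : ∀ n, ‖H n‖ ≤ (1 / 2 : ℝ) ^ n := by
      intro n
      refine (BoundedContinuousFunction.norm_le (by positivity)).mpr fun x => ?_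
      rw [hHnx, Real.norm_eq_abs, abs_mul,
        abs_of_nonneg (by positivity : (0 : ℝ) ≤ (1 / 2 : ℝ) ^ n)]
      have habs : |h n x| ≤ 1 := abs_le.mpr ⟨by linarith [(hh01 n x).1], (hh01 n x).2⟩
      nlinarith [pow_nonneg (by norm_num : (0 : ℝ) ≤ 1 / 2) n]
    have hGsum : Summable G := Summable.of_norm_bounded summable_geometric_two hnormG
    have hHsum : Summable H := Summable.of_norm_bounded summable_geometric_two hnormH
    set F : X →ᵇ ℝ := (∑' n, G n) - (∑' n, H n) with hFdef
    -- evaluation of the sums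
    have hGx : ∀ x : X, (∑' n, G n) x = ∑' n, (G n x) :=
      fun x => (BoundedContinuousFunction.evalCLM ℝ x).map_tsum hGsum
    have hHx : ∀ x : X, (∑' n, H n) x = ∑' n, (H n x) :=
      fun x => (BoundedContinuousFunction.evalCLM ℝ x).map_tsum hHsum
    have hGxs : ∀ x : X, Summable fun n => G n x := by
      intro x
      refine Summable.of_norm_bounded summable_geometric_two fun n => ?_
      rw [hGnx, Real.norm_eq_abs, abs_mul,
        abs_of_nonneg (by positivity : (0 : ℝ) ≤ (1 / 2 : ℝ) ^ n)]
      have habs : |g n x| ≤ 1 := abs_le.mpr ⟨by linarith [(hg01 n x).1], (hg01 n x).2⟩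
      nlinarith [pow_nonneg (by norm_num : (0 : ℝ) ≤ 1 / 2) n]
    have hHxs : ∀ x : X, Summable fun n => H n x := by
      intro x
      refine Summable.of_norm_bounded summable_geometric_two fun n => ?_
      rw [hHnx, Real.norm_eq_abs, abs_mul,
        abs_of_nonneg (by positivity : (0 : ℝ) ≤ (1 / 2 : ℝ) ^ n)]
      have habs : |h n x| ≤ 1 := abs_le.mpr ⟨by linarith [(hh01 n x).1], (hh01 n x).2⟩
      nlinarith [pow_nonneg (by norm_num : (0 : ℝ) ≤ 1 / 2) n]
    -- F is positive on A, negative on B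
    have hFpos : ∀ x ∈ A, 0 < F x := by
      intro x hx
      rw [← hKU] at hx
      obtain ⟨n, hn⟩ := Set.mem_iUnion.mp hx
      have hHzero : (∑' m, H m x) = 0 := by
        have : ∀ m : ℕ, H m x = 0 := by
          intro m
          rw [hHnx]
          have : h m x = 0 := hh0 m (subset_closure (hKU ▸ hx))
          rw [this, mul_zero]
        rw [tsum_congr this, tsum_zero]
      have hGlb : (1 / 2 : ℝ) ^ n ≤ ∑' m, G m x := by
        have hGnval : G n x = (1 / 2 : ℝ) ^ n := by
          rw [hGnx, hg1 n hn, Pi.one_apply, mul_one]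
        calc (1 / 2 : ℝ) ^ n = G n x := hGnval.symm
          _ ≤ ∑' m, G m x := Summable.le_tsum (hGxs x) n fun m _ => by
              rw [hGnx]
              exact mul_nonneg (by positivity) (hg01 m x).1
      have : F x = (∑' m, G m x) - (∑' m, H m x) := by
        rw [hFdef, BoundedContinuousFunction.sub_apply, hGx, hHx]
      rw [this, hHzero, sub_zero]
      calc (0 : ℝ) < (1 / 2 : ℝ) ^ n := by positivity
        _ ≤ _ := hGlb
    have hFneg : ∀ x ∈ B, F x < 0 := by
      intro x hx
      rw [← hLU] at hx
      obtain ⟨n, hn⟩ := Set.mem_iUnion.mp hx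
      have hGzero : (∑' m, G m x) = 0 := by
        have : ∀ m : ℕ, G m x = 0 := by
          intro m
          rw [hGnx]
          have : g m x = 0 := hg0 m (subset_closure (hLU ▸ hx))
          rw [this, mul_zero]
        rw [tsum_congr this, tsum_zero]
      have hHlb : (1 / 2 : ℝ) ^ n ≤ ∑' m, H m x := by
        have hHnval : H n x = (1 / 2 : ℝ) ^ n := by
          rw [hHnx, hh1 n hn, Pi.one_apply, mul_one]
        calc (1 / 2 : ℝ) ^ n = H n x := hHnval.symm
          _ ≤ ∑' m, H m x := Summable.le_tsum (hHxs x) n fun m _ => by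
              rw [hHnx]
              exact mul_nonneg (by positivity) (hh01 m x).1
      have hfx : F x = (∑' m, G m x) - (∑' m, H m x) := by
        rw [hFdef, BoundedContinuousFunction.sub_apply, hGx, hHx]
      rw [hfx, hGzero, zero_sub]
      have hp : (0 : ℝ) < (1 / 2 : ℝ) ^ n := by positivity
      linarith
    obtain ⟨k, hk⟩ := hF F
    have hkA : closure A ⊆ {x | k x = 1} := by
      apply closure_minimal
      · intro x hx
        exact aux_sign_pos (hk x) (hFpos x hx)
      · exact isClosed_eq k.continuous continuous_const
    have hkB : closure B ⊆ {x | k x = -1} := by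
      apply closure_minimal
      · intro x hx
        exact aux_sign_neg (hk x) (hFneg x hx)
      · exact isClosed_eq k.continuous continuous_const
    rw [Set.eq_empty_iff_forall_notMem]
    rintro x ⟨hxA, hxB⟩
    have h1 := hkA hxA
    have h2 := hkB hxB
    simp only [Set.mem_setOf_eq] at h1 h2
    linarith
  · intro hsep f
    set A : Set X := {x | 0 < f x} with hAdef
    set B : Set X := {x | f x < 0} with hBdef
    have hA : IsSigmaCompact A := by
      refine ⟨fun n => {x | ((n : ℝ) + 1)⁻¹ ≤ f x}, fun n => ?_, ?_⟩
      · exact (isClosed_le continuous_const f.continuous).isCompact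
      · ext x
        simp only [Set.mem_iUnion, Set.mem_setOf_eq, hAdef]
        constructor
        · rintro ⟨n, hn⟩
          have : (0 : ℝ) < ((n : ℝ) + 1)⁻¹ := by positivity
          linarith
        · intro hx
          obtain ⟨n, hn⟩ := exists_nat_one_div_lt hx
          exact ⟨n, by rw [one_div] at hn; linarith⟩
    have hB : IsSigmaCompact B := by
      refine ⟨fun n => {x | f x ≤ -((n : ℝ) + 1)⁻¹}, fun n => ?_, ?_⟩
      · exact (isClosed_le f.continuous continuous_const).isCompact
      · ext x
        simp only [Set.mem_iUnion, Set.mem_setOf_eq, hBdef]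
        constructor
        · rintro ⟨n, hn⟩
          have : (0 : ℝ) < ((n : ℝ) + 1)⁻¹ := by positivity
          linarith
        · intro hx
          obtain ⟨n, hn⟩ := exists_nat_one_div_lt (neg_pos.mpr hx)
          exact ⟨n, by rw [one_div] at hn; linarith⟩
    have hclA : closure A ⊆ {x | 0 ≤ f x} :=
      closure_minimal (fun x hx => le_of_lt (show 0 < f x from hx)) (isClosed_le continuous_const f.continuous)
    have hclB : closure B ⊆ {x | f x ≤ 0} :=
      closure_minimal (fun x hx => le_of_lt (show f x < 0 from hx)) (isClosed_le f.continuous continuous_const)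
    have h1 : closure A ∩ B = ∅ := by
      rw [Set.eq_empty_iff_forall_notMem]
      rintro x ⟨hx1, hx2⟩
      have h3 := hclA hx1
      have h4 : f x < 0 := hx2
      simp only [Set.mem_setOf_eq] at h3
      linarith
    have h2 : A ∩ closure B = ∅ := by
      rw [Set.eq_empty_iff_forall_notMem]
      rintro x ⟨hx1, hx2⟩
      have h3 := hclB hx2
      have h4 : 0 < f x := hx1
      simp only [Set.mem_setOf_eq] at h3
      linarith
    have hcl := hsep A B hA hB h1 h2
    obtain ⟨u, hu0, hu1, hu01⟩ := exists_continuous_zero_one_of_isClosed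
      (isClosed_closure (s := B)) (isClosed_closure (s := A))
      (by rw [Set.disjoint_iff_inter_eq_empty, Set.inter_comm]; exact hcl)
    refine ⟨BoundedContinuousFunction.mkOfCompact ⟨fun x => 2 * u x - 1, by fun_prop⟩, fun x => ?_⟩
    simp only [BoundedContinuousFunction.mkOfCompact_apply, ContinuousMap.coe_mk]
    rcases lt_trichotomy (f x) 0 with hx | hx | hx
    · have hxB : x ∈ closure B := subset_closure hx
      rw [hu0 hxB, Pi.zero_apply, abs_of_neg hx]
      ring
    · rw [hx, abs_zero, mul_zero]
    · have hxA : x ∈ closure A := subset_closure hx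
      rw [hu1 hxA, Pi.one_apply, abs_of_pos hx]
      ring
end

section
/- Let X be a locally compact Hausdorff space and let μ and ν be regular (complex/signed) Borel measures in M(X). Then μ and ν are mutually singular if and only if ‖μ + ν‖ = ‖μ − ν‖ = ‖μ‖ + ‖ν‖, where ‖·‖ denotes the total variation norm. -/
open MeasureTheory

/-- The total variation norm of a signed Borel measure. -/
noncomputable def tvNorm {X : Type*} [MeasurableSpace X] (μ : SignedMeasure X) : ℝ :=
  (μ.totalVariation Set.univ).toReal

section Aux

variable {X : Type*} [MeasurableSpace X]

lemma jd_apply (σ : SignedMeasure X) {A : Set X} (hA : MeasurableSet A) :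
    σ A = (σ.toJordanDecomposition.posPart A).toReal
        - (σ.toJordanDecomposition.negPart A).toReal := by
  conv_lhs => rw [← σ.toSignedMeasure_toJordanDecomposition]
  rw [MeasureTheory.JordanDecomposition.toSignedMeasure,
    MeasureTheory.Measure.toSignedMeasure_sub_apply hA]
  rfl

lemma tvNorm_eq (σ : SignedMeasure X) :
    tvNorm σ = (σ.toJordanDecomposition.posPart Set.univ).toReal
      + (σ.toJordanDecomposition.negPart Set.univ).toReal := by
  rw [tvNorm, SignedMeasure.totalVariation, Measure.add_apply,
    ENNReal.toReal_add (measure_ne_top _ _) (measure_ne_top _ _)]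

lemma sub_le' (σ : SignedMeasure X) {B : Set X} (hB : MeasurableSet B) :
    σ B - σ Bᶜ ≤ tvNorm σ := by
  rw [jd_apply σ hB, jd_apply σ hB.compl, tvNorm_eq]
  have h1 : σ.toJordanDecomposition.posPart Set.univ
      = σ.toJordanDecomposition.posPart B + σ.toJordanDecomposition.posPart Bᶜ :=
    (measure_add_measure_compl hB).symm
  have h2 : σ.toJordanDecomposition.negPart Set.univ
      = σ.toJordanDecomposition.negPart B + σ.toJordanDecomposition.negPart Bᶜ :=
    (measure_add_measure_compl hB).symm
  rw [h1, h2, ENNReal.toReal_add (measure_ne_top _ _) (measure_ne_top _ _),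
    ENNReal.toReal_add (measure_ne_top _ _) (measure_ne_top _ _)]
  have := ENNReal.toReal_nonneg (a := σ.toJordanDecomposition.posPart Bᶜ)
  have := ENNReal.toReal_nonneg (a := σ.toJordanDecomposition.negPart B)
  linarith

lemma exists_hahn' (σ : SignedMeasure X) :
    ∃ P : Set X, MeasurableSet P ∧ σ P - σ Pᶜ = tvNorm σ := by
  obtain ⟨S, hS, -, -, hpos, hneg⟩ :=
    σ.toJordanDecomposition.exists_compl_positive_negative
  refine ⟨Sᶜ, hS.compl, ?_⟩
  rw [jd_apply σ hS.compl, jd_apply σ hS.compl.compl, tvNorm_eq, compl_compl]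
  have h1 : σ.toJordanDecomposition.posPart Set.univ
      = σ.toJordanDecomposition.posPart S + σ.toJordanDecomposition.posPart Sᶜ :=
    (measure_add_measure_compl hS).symm
  have h2 : σ.toJordanDecomposition.negPart Set.univ
      = σ.toJordanDecomposition.negPart S + σ.toJordanDecomposition.negPart Sᶜ :=
    (measure_add_measure_compl hS).symm
  rw [h1, h2, hpos, hneg, zero_add, add_zero]
  simp

lemma force' (σ : SignedMeasure X) {B : Set X} (hB : MeasurableSet B)
    (h : σ B - σ Bᶜ = tvNorm σ) :
    σ.toJordanDecomposition.posPart Bᶜ = 0 ∧ σ.toJordanDecomposition.negPart B = 0 := by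
  rw [jd_apply σ hB, jd_apply σ hB.compl, tvNorm_eq] at h
  have h1 : σ.toJordanDecomposition.posPart Set.univ
      = σ.toJordanDecomposition.posPart B + σ.toJordanDecomposition.posPart Bᶜ :=
    (measure_add_measure_compl hB).symm
  have h2 : σ.toJordanDecomposition.negPart Set.univ
      = σ.toJordanDecomposition.negPart B + σ.toJordanDecomposition.negPart Bᶜ :=
    (measure_add_measure_compl hB).symm
  rw [h1, h2, ENNReal.toReal_add (measure_ne_top _ _) (measure_ne_top _ _),
    ENNReal.toReal_add (measure_ne_top _ _) (measure_ne_top _ _)] at h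
  have hp : (σ.toJordanDecomposition.posPart Bᶜ).toReal = 0 := by
    have := ENNReal.toReal_nonneg (a := σ.toJordanDecomposition.posPart Bᶜ)
    have := ENNReal.toReal_nonneg (a := σ.toJordanDecomposition.negPart B)
    linarith
  have hq : (σ.toJordanDecomposition.negPart B).toReal = 0 := by
    have := ENNReal.toReal_nonneg (a := σ.toJordanDecomposition.posPart Bᶜ)
    have := ENNReal.toReal_nonneg (a := σ.toJordanDecomposition.negPart B)
    linarith
  exact ⟨((ENNReal.toReal_eq_zero_iff _).1 hp).resolve_right (measure_ne_top _ _),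
    ((ENNReal.toReal_eq_zero_iff _).1 hq).resolve_right (measure_ne_top _ _)⟩

lemma apply_glue (σ : SignedMeasure X) {E A B : Set X} (hE : MeasurableSet E)
    (hA : MeasurableSet A) (hB : MeasurableSet B) (hσE : σ.totalVariation E = 0) :
    σ ((A ∩ Eᶜ) ∪ (B ∩ E)) = σ A := by
  have hdisj : Disjoint (A ∩ Eᶜ) (B ∩ E) :=
    Set.disjoint_of_subset Set.inter_subset_right Set.inter_subset_right disjoint_compl_left
  rw [MeasureTheory.VectorMeasure.of_union hdisj (hA.inter hE.compl) (hB.inter hE)]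
  have hz : σ (B ∩ E) = 0 :=
    σ.null_of_totalVariation_zero (measure_mono_null Set.inter_subset_right hσE)
  have hz2 : σ (A ∩ E) = 0 :=
    σ.null_of_totalVariation_zero (measure_mono_null Set.inter_subset_right hσE)
  have hAs : σ A = σ (A ∩ Eᶜ) + σ (A ∩ E) := by
    rw [← MeasureTheory.VectorMeasure.of_union
      (Set.disjoint_of_subset Set.inter_subset_right Set.inter_subset_right
        disjoint_compl_left) (hA.inter hE.compl) (hA.inter hE)]
    congr 1
    rw [Set.union_comm, Set.inter_union_compl]
  rw [hz, hz2] at *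
  linarith [hAs]

lemma apply_glue₂ (σ : SignedMeasure X) {E A B : Set X} (hE : MeasurableSet E)
    (hA : MeasurableSet A) (hB : MeasurableSet B) (hσEc : σ.totalVariation Eᶜ = 0) :
    σ ((A ∩ Eᶜ) ∪ (B ∩ E)) = σ B := by
  have h := apply_glue σ hE.compl hB hA hσEc
  rw [compl_compl] at h
  rw [← h, Set.union_comm]

end Aux

/-- For regular Borel measures `μ`, `ν` on a locally compact Hausdorff space,
`μ ⟂ ν` iff `‖μ + ν‖ = ‖μ − ν‖ = ‖μ‖ + ‖ν‖` in the total variation norm. -/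
theorem mutuallySingular_iff_norm_add_eq_and_norm_sub_eq
    {X : Type*} [TopologicalSpace X] [T2Space X] [LocallyCompactSpace X]
    [MeasurableSpace X] [BorelSpace X]
    (μ ν : SignedMeasure X) (hμ : μ.totalVariation.Regular) (hν : ν.totalVariation.Regular) :
    (∃ E : Set X, MeasurableSet E ∧ μ.totalVariation E = 0 ∧ ν.totalVariation Eᶜ = 0) ↔
      tvNorm (μ + ν) = tvNorm μ + tvNorm ν ∧ tvNorm (μ - ν) = tvNorm μ + tvNorm ν := by
  constructor
  · rintro ⟨E, hE, hμE, hνE⟩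
    obtain ⟨Pμ, hPμ, hPμeq⟩ := exists_hahn' μ
    obtain ⟨Pν, hPν, hPνeq⟩ := exists_hahn' ν
    have le_add : tvNorm (μ + ν) ≤ tvNorm μ + tvNorm ν := by
      obtain ⟨P, hP, hPeq⟩ := exists_hahn' (μ + ν)
      have h1 := sub_le' μ hP
      have h2 := sub_le' ν hP
      rw [← hPeq, VectorMeasure.add_apply, VectorMeasure.add_apply]
      linarith
    have le_sub : tvNorm (μ - ν) ≤ tvNorm μ + tvNorm ν := by
      obtain ⟨P, hP, hPeq⟩ := exists_hahn' (μ - ν)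
      have h1 := sub_le' μ hP
      have h2 := sub_le' ν hP.compl
      rw [compl_compl] at h2
      rw [← hPeq, VectorMeasure.sub_apply, VectorMeasure.sub_apply]
      linarith
    constructor
    · refine le_antisymm le_add ?_
      set B : Set X := (Pμ ∩ Eᶜ) ∪ (Pν ∩ E) with hBdef
      have hBm : MeasurableSet B := (hPμ.inter hE.compl).union (hPν.inter hE)
      have hBc : Bᶜ = (Pμᶜ ∩ Eᶜ) ∪ (Pνᶜ ∩ E) := by
        ext x; by_cases hx : x ∈ E <;> simp [hBdef, hx]
      have hμB : μ B = μ Pμ := apply_glue μ hE hPμ hPν hμE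
      have hμBc : μ Bᶜ = μ Pμᶜ := by
        rw [hBc]; exact apply_glue μ hE hPμ.compl hPν.compl hμE
      have hνB : ν B = ν Pν := apply_glue₂ ν hE hPμ hPν hνE
      have hνBc : ν Bᶜ = ν Pνᶜ := by
        rw [hBc]; exact apply_glue₂ ν hE hPμ.compl hPν.compl hνE
      have h := sub_le' (μ + ν) hBm
      rw [VectorMeasure.add_apply, VectorMeasure.add_apply, hμB, hμBc, hνB, hνBc] at h
      linarith
    · refine le_antisymm le_sub ?_
      set B : Set X := (Pμ ∩ Eᶜ) ∪ (Pνᶜ ∩ E) with hBdef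
      have hBm : MeasurableSet B := (hPμ.inter hE.compl).union (hPν.compl.inter hE)
      have hBc : Bᶜ = (Pμᶜ ∩ Eᶜ) ∪ (Pν ∩ E) := by
        ext x; by_cases hx : x ∈ E <;> simp [hBdef, hx]
      have hμB : μ B = μ Pμ := apply_glue μ hE hPμ hPν.compl hμE
      have hμBc : μ Bᶜ = μ Pμᶜ := by
        rw [hBc]; exact apply_glue μ hE hPμ.compl hPν hμE
      have hνB : ν B = ν Pνᶜ := apply_glue₂ ν hE hPμ hPν.compl hνE
      have hνBc : ν Bᶜ = ν Pν := by
        rw [hBc]; exact apply_glue₂ ν hE hPμ.compl hPν hνE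
      have h := sub_le' (μ - ν) hBm
      rw [VectorMeasure.sub_apply, VectorMeasure.sub_apply, hμB, hμBc, hνB, hνBc] at h
      linarith
  · rintro ⟨h1, h2⟩
    obtain ⟨P, hP, hPeq⟩ := exists_hahn' (μ + ν)
    rw [h1, VectorMeasure.add_apply, VectorMeasure.add_apply] at hPeq
    have hμP : μ P - μ Pᶜ = tvNorm μ :=
      le_antisymm (sub_le' μ hP) (by have := sub_le' ν hP; linarith)
    have hνP : ν P - ν Pᶜ = tvNorm ν :=
      le_antisymm (sub_le' ν hP) (by have := sub_le' μ hP; linarith)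
    obtain ⟨pμPc, qμP⟩ := force' μ hP hμP
    obtain ⟨pνPc, qνP⟩ := force' ν hP hνP
    obtain ⟨Q, hQ, hQeq⟩ := exists_hahn' (μ - ν)
    rw [h2, VectorMeasure.sub_apply, VectorMeasure.sub_apply] at hQeq
    have hμQ : μ Q - μ Qᶜ = tvNorm μ := by
      refine le_antisymm (sub_le' μ hQ) ?_
      have := sub_le' ν hQ.compl
      rw [compl_compl] at this
      linarith
    have hνQc : ν Qᶜ - ν Qᶜᶜ = tvNorm ν := by
      rw [compl_compl]
      refine le_antisymm ?_ (by have := sub_le' μ hQ; linarith)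
      have := sub_le' ν hQ.compl
      rwa [compl_compl] at this
    obtain ⟨pμQc, qμQ⟩ := force' μ hQ hμQ
    obtain ⟨pνQ, qνQc⟩ := force' ν hQ.compl hνQc
    rw [compl_compl] at pνQ
    refine ⟨(P ∩ Qᶜ) ∪ (Pᶜ ∩ Q), (hP.inter hQ.compl).union (hP.compl.inter hQ), ?_, ?_⟩
    · rw [SignedMeasure.totalVariation, Measure.add_apply]
      have hpos : μ.toJordanDecomposition.posPart ((P ∩ Qᶜ) ∪ (Pᶜ ∩ Q)) = 0 :=
        measure_union_null (measure_mono_null Set.inter_subset_right pμQc)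
          (measure_mono_null Set.inter_subset_left pμPc)
      have hneg : μ.toJordanDecomposition.negPart ((P ∩ Qᶜ) ∪ (Pᶜ ∩ Q)) = 0 :=
        measure_union_null (measure_mono_null Set.inter_subset_left qμP)
          (measure_mono_null Set.inter_subset_right qμQ)
      rw [hpos, hneg, add_zero]
    · have hEc : ((P ∩ Qᶜ) ∪ (Pᶜ ∩ Q))ᶜ = (P ∩ Q) ∪ (Pᶜ ∩ Qᶜ) := by
        ext x; by_cases hx : x ∈ P <;> simp [hx]
      rw [hEc, SignedMeasure.totalVariation, Measure.add_apply]
      have hpos : ν.toJordanDecomposition.posPart ((P ∩ Q) ∪ (Pᶜ ∩ Qᶜ)) = 0 :=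
        measure_union_null (measure_mono_null Set.inter_subset_right pνQ)
          (measure_mono_null Set.inter_subset_left pνPc)
      have hneg : ν.toJordanDecomposition.negPart ((P ∩ Q) ∪ (Pᶜ ∩ Qᶜ)) = 0 :=
        measure_union_null (measure_mono_null Set.inter_subset_left qνP)
          (measure_mono_null Set.inter_subset_right qνQc)
      rw [hpos, hneg, add_zero]
end

section
/- Let G be a locally compact Hausdorff group and let z ∈ G^* be right cancellable in G^{luc}, i.e., for all m, n ∈ G^{luc}, mz = nz implies m = n. Then z is right cancellable in LUC(G)^*: for all m, n ∈ LUC(G)^*, m·z = n·z implies m = n. Moreover, the unital *-subalgebra {z f : f ∈ LUC(G)}, where (z f)(x) = ⟨z, l_x f⟩, is norm-dense in LUC(G). -/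
open scoped BoundedContinuousFunction
open Filter Topology

set_option synthInstance.maxHeartbeats 1000000
set_option maxHeartbeats 1000000

namespace LucPaper

variable {G : Type*} [Group G] [TopologicalSpace G] [IsTopologicalGroup G]

/-- Left translation of a bounded continuous function: `lTrans g f x = f (g * x)`. -/
noncomputable def lTrans (g : G) (f : G →ᵇ ℂ) : G →ᵇ ℂ :=
  f.compContinuous ⟨fun x => g * x, continuous_const.mul continuous_id⟩

@[simp] lemma lTrans_apply (g : G) (f : G →ᵇ ℂ) (x : G) : lTrans g f x = f (g * x) := rfl

lemma lTrans_mul (g : G) (f h : G →ᵇ ℂ) : lTrans g (f * h) = lTrans g f * lTrans g h := by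
  ext x; simp [lTrans]

lemma lTrans_add (g : G) (f h : G →ᵇ ℂ) : lTrans g (f + h) = lTrans g f + lTrans g h := by
  ext x; simp [lTrans]

lemma lTrans_smul (g : G) (c : ℂ) (f : G →ᵇ ℂ) : lTrans g (c • f) = c • lTrans g f := by
  ext x; simp [lTrans]

lemma lTrans_sub (g : G) (f h : G →ᵇ ℂ) : lTrans g (f - h) = lTrans g f - lTrans g h := by
  ext x; simp [lTrans]

lemma lTrans_lTrans (x g : G) (f : G →ᵇ ℂ) : lTrans x (lTrans g f) = lTrans (g * x) f := by
  ext y; simp [mul_assoc]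

lemma norm_lTrans_le (g : G) (f : G →ᵇ ℂ) : ‖lTrans g f‖ ≤ ‖f‖ :=
  f.norm_compContinuous_le _

lemma lTrans_algebraMap (g : G) (c : ℂ) :
    lTrans g (algebraMap ℂ (G →ᵇ ℂ) c) = algebraMap ℂ (G →ᵇ ℂ) c := by
  ext x; simp [lTrans]

lemma algebraMap_mem_luc (c : ℂ) :
    Continuous fun g : G => lTrans g (algebraMap ℂ (G →ᵇ ℂ) c) := by
  have e : (fun g : G => lTrans g (algebraMap ℂ (G →ᵇ ℂ) c)) =
      fun _ : G => algebraMap ℂ (G →ᵇ ℂ) c :=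
    funext fun g => lTrans_algebraMap g c
  rw [e]
  exact continuous_const

/-- The `C*`-algebra `LUC(G)` of bounded left uniformly continuous complex functions on `G`,
realized as a subalgebra of the bounded continuous functions. -/
noncomputable def LUC (G : Type*) [Group G] [TopologicalSpace G] [IsTopologicalGroup G] :
    Subalgebra ℂ (G →ᵇ ℂ) where
  carrier := {f | Continuous fun g : G => lTrans g f}
  mul_mem' {f h} hf hh := by
    have hf' : Continuous fun g : G => lTrans g f := hf
    have hh' : Continuous fun g : G => lTrans g h := hh
    have e : (fun g : G => lTrans g (f * h)) = fun g => lTrans g f * lTrans g h :=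
      funext fun g => lTrans_mul g f h
    show Continuous fun g : G => lTrans g (f * h)
    rw [e]
    exact hf'.mul hh'
  add_mem' {f h} hf hh := by
    have hf' : Continuous fun g : G => lTrans g f := hf
    have hh' : Continuous fun g : G => lTrans g h := hh
    have e : (fun g : G => lTrans g (f + h)) = fun g => lTrans g f + lTrans g h :=
      funext fun g => lTrans_add g f h
    show Continuous fun g : G => lTrans g (f + h)
    rw [e]
    exact hf'.add hh'
  algebraMap_mem' c := algebraMap_mem_luc c


section Instances
set_option synthInstance.maxHeartbeats 1000000 in
noncomputable instance instLUCNormedAddCommGroup (G : Type*) [Group G] [TopologicalSpace G]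
    [IsTopologicalGroup G] : NormedAddCommGroup (LUC G) := inferInstance

set_option synthInstance.maxHeartbeats 1000000 in
noncomputable instance instLUCNormedSpace (G : Type*) [Group G] [TopologicalSpace G]
    [IsTopologicalGroup G] : NormedSpace ℂ (LUC G) := inferInstance

set_option synthInstance.maxHeartbeats 1000000 in
noncomputable instance instLUCNormedRing (G : Type*) [Group G] [TopologicalSpace G]
    [IsTopologicalGroup G] : NormedRing (LUC G) := inferInstance
end Instances

/-- `LUC(G)^*`, the dual Banach space of `LUC(G)`. -/
noncomputable abbrev Ld (G : Type*) [Group G] [TopologicalSpace G] [IsTopologicalGroup G] :=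
  StrongDual ℂ (LUC G)

/-- Left translation as a map `LUC G → LUC G`. -/
noncomputable def lTransL (g : G) (f : LUC G) : LUC G :=
  ⟨lTrans g (f : G →ᵇ ℂ), by
    have hf : Continuous fun h : G => lTrans h (f : G →ᵇ ℂ) := f.2
    have e : (fun h : G => lTrans h (lTrans g (f : G →ᵇ ℂ))) =
        (fun k : G => lTrans k (f : G →ᵇ ℂ)) ∘ fun h : G => g * h := by
      funext h
      exact lTrans_lTrans h g (f : G →ᵇ ℂ)
    show Continuous fun h : G => lTrans h (lTrans g (f : G →ᵇ ℂ))
    rw [e]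
    exact hf.comp (continuous_const.mul continuous_id)⟩

@[simp] lemma lTransL_coe (g : G) (f : LUC G) :
    (lTransL g f : G →ᵇ ℂ) = lTrans g (f : G →ᵇ ℂ) := rfl

lemma continuous_lTransL (f : LUC G) : Continuous fun g : G => lTransL g f :=
  Continuous.subtype_mk f.2 _

lemma norm_lTransL_le (g : G) (f : LUC G) : ‖lTransL g f‖ ≤ ‖f‖ :=
  norm_lTrans_le g (f : G →ᵇ ℂ)

lemma lTransL_add (g : G) (f h : LUC G) : lTransL g (f + h) = lTransL g f + lTransL g h :=
  Subtype.ext (lTrans_add g _ _)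

lemma lTransL_smul (g : G) (c : ℂ) (f : LUC G) : lTransL g (c • f) = c • lTransL g f :=
  Subtype.ext (lTrans_smul g c _)

lemma lTransL_sub (g : G) (f h : LUC G) : lTransL g (f - h) = lTransL g f - lTransL g h :=
  Subtype.ext (lTrans_sub g _ _)

lemma lTransL_mul (g : G) (f h : LUC G) : lTransL g (f * h) = lTransL g f * lTransL g h :=
  Subtype.ext (lTrans_mul g _ _)

lemma lTransL_lTransL (x g : G) (f : LUC G) : lTransL x (lTransL g f) = lTransL (g * x) f :=
  Subtype.ext (lTrans_lTrans x g _)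

end LucPaper

namespace LucPaper
variable {G : Type*} [Group G] [TopologicalSpace G] [IsTopologicalGroup G]

/-- The function `n f : g ↦ ⟨n, l_g f⟩` as a bounded continuous function. -/
noncomputable def arensBCF (n : Ld G) (f : LUC G) : G →ᵇ ℂ :=
  BoundedContinuousFunction.ofNormedAddCommGroup (fun g : G => n (lTransL g f))
    (n.continuous.comp (continuous_lTransL f)) (‖n‖ * ‖f‖)
    (fun g => le_trans (n.le_opNorm _)
      (mul_le_mul_of_nonneg_left (norm_lTransL_le g f) (norm_nonneg n)))

@[simp] lemma arensBCF_apply (n : Ld G) (f : LUC G) (g : G) :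
    arensBCF n f g = n (lTransL g f) := rfl

lemma norm_arensBCF_le (n : Ld G) (f : LUC G) : ‖arensBCF n f‖ ≤ ‖n‖ * ‖f‖ :=
  BoundedContinuousFunction.norm_ofNormedAddCommGroup_le _
    (mul_nonneg (norm_nonneg n) (norm_nonneg f)) _

lemma arensBCF_sub (n : Ld G) (f h : LUC G) :
    arensBCF n (f - h) = arensBCF n f - arensBCF n h := by
  ext g
  simp [lTransL_sub]

lemma arensBCF_add (n : Ld G) (f h : LUC G) :
    arensBCF n (f + h) = arensBCF n f + arensBCF n h := by
  ext g
  simp [lTransL_add]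

lemma arensBCF_smul (n : Ld G) (c : ℂ) (f : LUC G) :
    arensBCF n (c • f) = c • arensBCF n f := by
  ext g
  simp [lTransL_smul]

lemma lipschitz_arensBCF (n : Ld G) :
    LipschitzWith ‖n‖₊ fun f : LUC G => arensBCF n f := by
  apply LipschitzWith.of_dist_le_mul
  intro f h
  rw [dist_eq_norm, dist_eq_norm, ← arensBCF_sub]
  have : ‖f - h‖ = ‖(f - h : LUC G)‖ := rfl
  calc ‖arensBCF n (f - h)‖ ≤ ‖n‖ * ‖f - h‖ := norm_arensBCF_le n (f - h)
    _ = ‖n‖₊ * ‖f - h‖ := rfl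

lemma lTrans_arensBCF (n : Ld G) (f : LUC G) (g : G) :
    lTrans g (arensBCF n f) = arensBCF n (lTransL g f) := by
  ext x
  simp only [lTrans_apply, arensBCF_apply]
  rw [lTransL_lTransL]

/-- The element `n f` of `LUC(G)`. -/
noncomputable def arensFn (n : Ld G) (f : LUC G) : LUC G :=
  ⟨arensBCF n f, by
    have e : (fun g : G => lTrans g (arensBCF n f)) =
        (fun h : LUC G => arensBCF n h) ∘ fun g : G => lTransL g f :=
      funext fun g => lTrans_arensBCF n f g
    show Continuous fun g : G => lTrans g (arensBCF n f)
    rw [e]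
    exact (lipschitz_arensBCF n).continuous.comp (continuous_lTransL f)⟩

@[simp] lemma arensFn_coe (n : Ld G) (f : LUC G) : (arensFn n f : G →ᵇ ℂ) = arensBCF n f := rfl

lemma norm_arensFn_le (n : Ld G) (f : LUC G) : ‖arensFn n f‖ ≤ ‖n‖ * ‖f‖ :=
  norm_arensBCF_le n f

/-- The Arens-type product on `LUC(G)^*`: `⟨m · n, f⟩ = ⟨m, n f⟩`. -/
noncomputable def arens (m n : Ld G) : Ld G :=
  LinearMap.mkContinuous
    { toFun := fun f : LUC G => m (arensFn n f)
      map_add' := fun f h => by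
        show m (arensFn n (f + h)) = m (arensFn n f) + m (arensFn n h)
        rw [show arensFn n (f + h) = arensFn n f + arensFn n h from
          Subtype.ext (arensBCF_add n f h), map_add]
      map_smul' := fun c f => by
        show m (arensFn n (c • f)) = c • m (arensFn n f)
        rw [show arensFn n (c • f) = c • arensFn n f from
          Subtype.ext (arensBCF_smul n c f), map_smul] }
    (‖m‖ * ‖n‖)
    (fun f => by
      calc ‖m (arensFn n f)‖ ≤ ‖m‖ * ‖arensFn n f‖ := m.le_opNorm _
        _ ≤ ‖m‖ * (‖n‖ * ‖f‖) :=
            mul_le_mul_of_nonneg_left (norm_arensFn_le n f) (norm_nonneg m)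
        _ = ‖m‖ * ‖n‖ * ‖f‖ := by ring)

@[simp] lemma arens_apply (m n : Ld G) (f : LUC G) : arens m n f = m (arensFn n f) := rfl

end LucPaper
namespace LucPaper
variable {G : Type*} [Group G] [TopologicalSpace G] [IsTopologicalGroup G]

/-- Evaluation at a point of `G`, as an element of `LUC(G)^*`. -/
noncomputable def evalChar (g : G) : Ld G :=
  LinearMap.mkContinuous
    { toFun := fun f : LUC G => (f : G →ᵇ ℂ) g
      map_add' := fun f h => rfl
      map_smul' := fun c f => rfl }
    1 (fun f => by rw [one_mul]; exact (f : G →ᵇ ℂ).norm_coe_le_norm g)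

@[simp] lemma evalChar_apply (g : G) (f : LUC G) : evalChar g f = (f : G →ᵇ ℂ) g := rfl

variable (G) in
/-- The `LUC`-compactification `G^{luc}` realized as the set of nonzero multiplicative
functionals in `LUC(G)^*`. -/
def gLuc : Set (Ld G) :=
  {m | m ≠ 0 ∧ ∀ f h : LUC G, m (f * h) = m f * m h}

variable (G) in
/-- The corona `G^* = G^{luc} \ G` in `LUC(G)^*`. -/
def gStar : Set (Ld G) :=
  gLuc G \ Set.range (evalChar (G := G))

lemma evalChar_mem_gLuc (g : G) : evalChar g ∈ gLuc G := by
  constructor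
  · intro h0
    have h1 : evalChar g (1 : LUC G) = 0 := by rw [h0]; rfl
    have h2 : evalChar g (1 : LUC G) = 1 := rfl
    rw [h2] at h1
    exact one_ne_zero h1
  · intro f h
    have : ((f * h : LUC G) : G →ᵇ ℂ) = (f : G →ᵇ ℂ) * (h : G →ᵇ ℂ) := rfl
    simp [this]

end LucPaper
namespace LucPaper
variable {G : Type*} [Group G] [TopologicalSpace G] [IsTopologicalGroup G]

/-- Membership in `C_0(G)`: vanishing at infinity. -/
def IsC0 (f : G →ᵇ ℂ) : Prop := Tendsto (f : G → ℂ) (cocompact G) (𝓝 0)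

variable (G) in
/-- The annihilator `C_0(G)^⊥` of `C_0(G)` in `LUC(G)^*`. -/
noncomputable def C0perp : Submodule ℂ (Ld G) where
  carrier := {m | ∀ f : LUC G, IsC0 (f : G →ᵇ ℂ) → m f = 0}
  add_mem' {m n} hm hn := fun f hf => by
    simp [hm f hf, hn f hf]
  zero_mem' := fun f _ => rfl
  smul_mem' c m hm := fun f hf => by
    simp [hm f hf]

lemma isC0_lTrans {f : G →ᵇ ℂ} (hf : IsC0 f) (g : G) : IsC0 (lTrans g f) := by
  have h1 : Tendsto (⇑(Homeomorph.mulLeft g)) (cocompact G) (cocompact G) :=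
    tendsto_map.mono_right (le_of_eq ((Homeomorph.mulLeft g).map_cocompact))
  have h1' : Tendsto (fun x : G => g * x) (cocompact G) (cocompact G) := h1
  exact hf.comp h1'

lemma isC0_rTransBCF {f : G →ᵇ ℂ} (hf : IsC0 f) (x : G) :
    IsC0 (f.compContinuous ⟨fun g : G => g * x, continuous_id.mul continuous_const⟩) := by
  have h1 : Tendsto (⇑(Homeomorph.mulRight x)) (cocompact G) (cocompact G) :=
    tendsto_map.mono_right (le_of_eq ((Homeomorph.mulRight x).map_cocompact))
  have h1' : Tendsto (fun g : G => g * x) (cocompact G) (cocompact G) := h1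
  exact hf.comp h1'

/-- `C_0(G)^⊥` is a left ideal for the Arens product: if `n ∈ C_0(G)^⊥` then `m · n ∈ C_0(G)^⊥`
for every `m`. -/
lemma arens_mem_C0perp_left (m : Ld G) {n : Ld G} (hn : n ∈ C0perp G) :
    arens m n ∈ C0perp G := by
  intro f hf
  have hz : arensFn n f = 0 := by
    apply Subtype.ext
    ext g
    exact hn (lTransL g f) (isC0_lTrans hf g)
  rw [arens_apply, hz, map_zero]

/-- Multiplying an element of `C_0(G)^⊥` by a point evaluation on the right stays in
`C_0(G)^⊥`. -/
lemma arens_evalChar_mem_C0perp {m : Ld G} (hm : m ∈ C0perp G) (x : G) :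
    arens m (evalChar x) ∈ C0perp G := by
  intro f hf
  rw [arens_apply]
  apply hm
  show IsC0 (arensBCF (evalChar x) f)
  have e : (arensBCF (evalChar x) f : G → ℂ) =
      ((f : G →ᵇ ℂ).compContinuous ⟨fun g : G => g * x, continuous_id.mul continuous_const⟩ :
        G → ℂ) := by
    funext g
    rfl
  show Tendsto (arensBCF (evalChar x) f : G → ℂ) (cocompact G) (𝓝 0)
  rw [e]
  exact isC0_rTransBCF hf x

/-- The multiplication on `C_0(G)^⊥` induced by the Arens product. -/
noncomputable instance : Mul (C0perp G) :=
  ⟨fun m n => ⟨arens m.1 n.1, arens_mem_C0perp_left m.1 n.2⟩⟩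

@[simp] lemma C0perp_mul_coe (m n : C0perp G) : ((m * n : C0perp G) : Ld G) = arens m.1 n.1 := rfl

end LucPaper
namespace LucPaper
variable {G : Type*} [Group G] [TopologicalSpace G] [IsTopologicalGroup G]

section WeakStar

variable {H : Type*} [Group H] [TopologicalSpace H] [IsTopologicalGroup H]

/-- Weak-star continuity for a map `C_0(G)^⊥ → C_0(H)^⊥`, phrased via filters:
whenever a filter converges pointwise (weak-star) to `m`, the images converge pointwise
(weak-star) to the image of `m`. -/
def WStarContinuousC0 (T : C0perp G → C0perp H) : Prop :=
  ∀ (l : Filter (C0perp G)) (m : C0perp G),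
    (∀ f : LUC G, Tendsto (fun n : C0perp G => (n : Ld G) f) l (𝓝 ((m : Ld G) f))) →
    ∀ f : LUC H, Tendsto (fun n : C0perp G => (T n : Ld H) f) l (𝓝 ((T m : Ld H) f))

/-- Weak-star continuity for a map `LUC(G)^* → LUC(H)^*`, phrased via filters. -/
def WStarContinuousD (T : Ld G → Ld H) : Prop :=
  ∀ (l : Filter (Ld G)) (m : Ld G),
    (∀ f : LUC G, Tendsto (fun n : Ld G => n f) l (𝓝 (m f))) →
    ∀ f : LUC H, Tendsto (fun n : Ld G => T n f) l (𝓝 (T m f))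

end WeakStar

section WeakDualSide

/-- `LUC(G)^*` equipped with its weak-star topology. -/
noncomputable abbrev LdW (G : Type*) [Group G] [TopologicalSpace G] [IsTopologicalGroup G] :=
  WeakDual ℂ (LUC G)

variable (G) in
/-- The `LUC`-compactification `G^{luc}` as a subset of the weak-star dual. -/
def gLucW : Set (LdW G) :=
  {m | m ≠ 0 ∧ ∀ f h : LUC G, m (f * h) = m f * m h}

/-- Evaluation at a point of `G` as an element of the weak-star dual. -/
noncomputable def evalCharW (g : G) : LdW G :=
  StrongDual.toWeakDual (evalChar g)

variable (G) in
/-- The corona `G^* = G^{luc} \ G` inside the weak-star dual. -/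
def gStarW : Set (LdW G) :=
  gLucW G \ Set.range (evalCharW (G := G))

/-- The Arens product transported to the weak-star dual. -/
noncomputable def arensW (m n : LdW G) : LdW G :=
  StrongDual.toWeakDual
    (arens (WeakDual.toStrongDual m) (WeakDual.toStrongDual n))

lemma evalCharW_mem_gLucW (g : G) : evalCharW g ∈ gLucW G := by
  have h := evalChar_mem_gLuc (g := g)
  constructor
  · intro h0
    apply h.1
    have : WeakDual.toStrongDual (evalCharW g) = WeakDual.toStrongDual (0 : LdW G) := by
      rw [h0]
    simpa [evalCharW] using this
  · intro f k
    exact h.2 f k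

end WeakDualSide

section FSpace

/-- `X` is an F-space: every bounded continuous real function `f` factors as `f = k·|f|`
with `k` bounded continuous. -/
def IsFSpace (X : Type*) [TopologicalSpace X] : Prop :=
  ∀ f : X →ᵇ ℝ, ∃ k : X →ᵇ ℝ, ∀ x : X, f x = k x * |f x|

/-- A P-point: every `G_δ` set containing the point is a neighbourhood of the point. -/
def IsPPoint {X : Type*} [TopologicalSpace X] (p : X) : Prop :=
  ∀ s : Set X, p ∈ s → (∃ U : ℕ → Set X, (∀ n, IsOpen (U n)) ∧ s = ⋂ n, U n) → s ∈ 𝓝 p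

end FSpace

end LucPaper




namespace LucPaper
variable {G : Type*} [Group G] [TopologicalSpace G] [IsTopologicalGroup G]

lemma lTrans_star (g : G) (f : G →ᵇ ℂ) : lTrans g (star f) = star (lTrans g f) := by
  ext x; simp [lTrans]

lemma star_mem_LUC {f : G →ᵇ ℂ} (hf : f ∈ LUC G) : star f ∈ LUC G := by
  have hf' : Continuous fun g : G => lTrans g f := hf
  have e : (fun g : G => lTrans g (star f)) = fun g : G => star (lTrans g f) :=
    funext fun g => lTrans_star g f
  show Continuous fun g : G => lTrans g (star f)
  rw [e]
  exact continuous_star.comp hf'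

noncomputable instance : StarRing (LUC G) where
  star f := ⟨star (f : G →ᵇ ℂ), star_mem_LUC f.2⟩
  star_involutive f := Subtype.ext (star_star (f : G →ᵇ ℂ))
  star_mul f h := Subtype.ext (star_mul (f : G →ᵇ ℂ) (h : G →ᵇ ℂ))
  star_add f h := Subtype.ext (star_add (f : G →ᵇ ℂ) (h : G →ᵇ ℂ))

@[simp] lemma star_coe_LUC (f : LUC G) :
    ((star f : LUC G) : G →ᵇ ℂ) = star (f : G →ᵇ ℂ) := rfl

instance : StarModule ℂ (LUC G) :=
  ⟨fun c f => Subtype.ext (star_smul c (f : G →ᵇ ℂ))⟩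

instance : CStarRing (LUC G) where
  norm_mul_self_le f := CStarRing.norm_mul_self_le (f : G →ᵇ ℂ)

noncomputable instance : NormedCommRing (LUC G) :=
  { instLUCNormedRing G with
    mul_comm := fun f h => Subtype.ext (mul_comm (f : G →ᵇ ℂ) (h : G →ᵇ ℂ)) }

lemma isClosed_LUC : IsClosed ((LUC G : Set (G →ᵇ ℂ))) := by
  refine IsSeqClosed.isClosed ?_
  intro u f hu huf
  show Continuous fun g : G => lTrans g f
  have key : TendstoUniformly (fun n (g : G) => lTrans g (u n)) (fun g => lTrans g f) atTop := by
    rw [Metric.tendstoUniformly_iff]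
    intro ε hε
    filter_upwards [Metric.tendsto_nhds.mp huf ε hε] with n hn g
    have e : lTrans g f - lTrans g (u n) = lTrans g (f - u n) := (lTrans_sub g f (u n)).symm
    rw [dist_eq_norm, e]
    calc ‖lTrans g (f - u n)‖ ≤ ‖f - u n‖ := norm_lTrans_le _ _
      _ < ε := by rw [← dist_eq_norm]; exact dist_comm (u n) f ▸ hn
  exact key.continuous (Filter.Eventually.of_forall (f := atTop) fun n => hu n).frequently

instance : CompleteSpace (LUC G) := isClosed_LUC.completeSpace_coe

noncomputable instance : CommCStarAlgebra (LUC G) where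
  mul_comm f h := Subtype.ext (mul_comm (f : G →ᵇ ℂ) (h : G →ᵇ ℂ))

open WeakDual in
lemma mem_characterSpace_of_mem_gLuc {m : Ld G} (hm : m ∈ gLuc G) :
    StrongDual.toWeakDual m ∈ characterSpace ℂ (LUC G) :=
  ⟨hm.1, hm.2⟩

open WeakDual in
lemma char_mem_gLuc (x : characterSpace ℂ (LUC G)) :
    WeakDual.toStrongDual (x : WeakDual ℂ (LUC G)) ∈ gLuc G :=
  ⟨x.2.1, x.2.2⟩

lemma gLuc_map_star {m : Ld G} (hm : m ∈ gLuc G) (f : LUC G) :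
    m (star f) = star (m f) := by
  let φ : WeakDual.characterSpace ℂ (LUC G) :=
    ⟨StrongDual.toWeakDual m, mem_characterSpace_of_mem_gLuc hm⟩
  exact map_star φ f

lemma gLuc_map_one {m : Ld G} (hm : m ∈ gLuc G) : m 1 = 1 := by
  obtain ⟨f, hf⟩ : ∃ f : LUC G, m f ≠ 0 := by
    by_contra h
    push_neg at h
    exact hm.1 (ContinuousLinearMap.ext fun f => h f)
  have h1 : m f * 1 = m f * m 1 := by
    rw [mul_one]
    simpa using hm.2 f 1
  exact (mul_left_cancel₀ hf h1).symm

lemma lTransL_one (g : G) : lTransL g (1 : LUC G) = 1 :=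
  Subtype.ext (by ext x; simp [lTrans])

lemma lTransL_zero (g : G) : lTransL g (0 : LUC G) = 0 :=
  Subtype.ext (by ext x; simp [lTrans])

lemma lTransL_star (g : G) (f : LUC G) : lTransL g (star f) = star (lTransL g f) :=
  Subtype.ext (lTrans_star g (f : G →ᵇ ℂ))

section ArensHom
variable {z : Ld G}

lemma arensFn_one (hz : z ∈ gLuc G) : arensFn z (1 : LUC G) = 1 := by
  apply Subtype.ext
  ext g
  show z (lTransL g 1) = 1
  rw [lTransL_one]
  exact gLuc_map_one hz

lemma arensFn_mul (hz : z ∈ gLuc G) (f h : LUC G) :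
    arensFn z (f * h) = arensFn z f * arensFn z h := by
  apply Subtype.ext
  ext g
  show z (lTransL g (f * h)) = z (lTransL g f) * z (lTransL g h)
  rw [lTransL_mul]
  exact hz.2 _ _

lemma arensFn_star (hz : z ∈ gLuc G) (f : LUC G) : arensFn z (star f) = star (arensFn z f) := by
  apply Subtype.ext
  ext g
  show z (lTransL g (star f)) = star (z (lTransL g f))
  rw [lTransL_star]
  exact gLuc_map_star hz _

/-- `f ↦ z f` as a unital star algebra homomorphism of `LUC(G)`. -/
noncomputable def arensHom (hz : z ∈ gLuc G) : LUC G →⋆ₐ[ℂ] LUC G where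
  toFun f := arensFn z f
  map_one' := arensFn_one hz
  map_mul' := arensFn_mul hz
  map_zero' := by
    apply Subtype.ext
    ext g
    show z (lTransL g 0) = 0
    rw [lTransL_zero]
    exact map_zero z
  map_add' f h := Subtype.ext (arensBCF_add z f h)
  commutes' c := by
    have e1 : (algebraMap ℂ (LUC G) c) = c • (1 : LUC G) := Algebra.algebraMap_eq_smul_one c
    rw [e1]
    show arensFn z (c • (1 : LUC G)) = c • (1 : LUC G)
    rw [show arensFn z (c • (1 : LUC G)) = c • arensFn z 1 from
      Subtype.ext (arensBCF_smul z c 1), arensFn_one hz]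
  map_star' := arensFn_star hz

@[simp] lemma arensHom_apply (hz : z ∈ gLuc G) (f : LUC G) : arensHom hz f = arensFn z f := rfl

end ArensHom

end LucPaper

open LucPaper Filter Topology
open scoped BoundedContinuousFunction

set_option maxHeartbeats 4000000 in
/-- If `z ∈ G^*` is right cancellable in `G^{luc}`, then `z` is right
cancellable in all of `LUC(G)^*`, and the set `{z f : f ∈ LUC(G)}` (where `(z f)(x) = ⟨z, l_x f⟩`)
is norm-dense in `LUC(G)`. -/
theorem right_cancellable_in_dual_and_dense_range
    {G : Type*} [Group G] [TopologicalSpace G] [IsTopologicalGroup G]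
    [T2Space G] [LocallyCompactSpace G]
    (z : Ld G) (hz : z ∈ gStar G)
    (hrc : ∀ m n : Ld G, m ∈ gLuc G → n ∈ gLuc G → arens m z = arens n z → m = n) :
    (∀ m n : Ld G, arens m z = arens n z → m = n) ∧
      Dense (Set.range fun f : LUC G => arensFn z f) := by
  classical
  have hzl : z ∈ gLuc G := hz.1
  set T : LUC G →⋆ₐ[ℂ] LUC G := arensHom hzl with hT
  let Δ := WeakDual.characterSpace ℂ (LUC G)
  haveI : CompactSpace Δ := inferInstanceAs (CompactSpace (WeakDual.characterSpace ℂ (LUC G)))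
  haveI : ContinuousStar C(Δ, ℂ) :=
    inferInstanceAs (ContinuousStar C(WeakDual.characterSpace ℂ (LUC G), ℂ))
  let Φ : LUC G ≃⋆ₐ[ℂ] C(Δ, ℂ) := gelfandStarTransform (LUC G)
  let ψ : LUC G →⋆ₐ[ℂ] C(Δ, ℂ) := (Φ : LUC G →⋆ₐ[ℂ] C(Δ, ℂ)).comp T
  -- key separation property from right cancellability on `G^{luc}`
  have hsep : ψ.range.SeparatesPoints := by
    intro x y hxy
    by_contra hc
    push_neg at hc
    apply hxy
    have key : ∀ f : LUC G, (x : WeakDual ℂ (LUC G)) (arensFn z f)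
        = (y : WeakDual ℂ (LUC G)) (arensFn z f) := by
      intro f
      have hmem : ⇑(ψ f) ∈ ((fun h : C(Δ, ℂ) => (h : Δ → ℂ)) '' (ψ.range : Set C(Δ, ℂ))) :=
        ⟨ψ f, ⟨f, rfl⟩, rfl⟩
      have := hc _ hmem
      exact this
    have heq : arens (WeakDual.toStrongDual (x : WeakDual ℂ (LUC G))) z
        = arens (WeakDual.toStrongDual (y : WeakDual ℂ (LUC G))) z :=
      ContinuousLinearMap.ext fun f => key f
    have := hrc _ _ (char_mem_gLuc x) (char_mem_gLuc y) heq
    exact Subtype.ext this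
  have htop := ContinuousMap.starSubalgebra_topologicalClosure_eq_top_of_separatesPoints
    ψ.range hsep
  have hdenseψ : Dense (ψ.range : Set C(Δ, ℂ)) := by
    rw [dense_iff_closure_eq, ← StarSubalgebra.topologicalClosure_coe, htop]
    rfl
  -- transport density back through the Gelfand homeomorphism
  have hΦ : Isometry (⇑Φ) := StarAlgEquiv.isometry Φ
  have hΦs : Isometry (⇑Φ.symm) := StarAlgEquiv.isometry Φ.symm
  let hΦhomeo : LUC G ≃ₜ C(Δ, ℂ) :=
    { toFun := Φ
      invFun := Φ.symm
      left_inv := Φ.symm_apply_apply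
      right_inv := Φ.apply_symm_apply
      continuous_toFun := hΦ.continuous
      continuous_invFun := hΦs.continuous }
  have himg : hΦhomeo.symm '' (ψ.range : Set C(Δ, ℂ))
      = Set.range fun f : LUC G => arensFn z f := by
    ext f
    constructor
    · rintro ⟨h, ⟨g, rfl⟩, rfl⟩
      exact ⟨g, by simp [hΦhomeo, ψ, hT]⟩
    · rintro ⟨g, rfl⟩
      exact ⟨ψ g, ⟨g, rfl⟩, by simp [hΦhomeo, ψ, hT]⟩
  have hdense : Dense (Set.range fun f : LUC G => arensFn z f) := by
    rw [← himg]
    rw [dense_iff_closure_eq, ← Homeomorph.image_closure,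
      dense_iff_closure_eq.mp hdenseψ, Set.image_univ]
    exact (Homeomorph.surjective _).range_eq
  refine ⟨?_, hdense⟩
  intro m n hmn
  have hfun : (⇑m : LUC G → ℂ) = ⇑n := by
    apply Continuous.ext_on hdense m.continuous n.continuous
    rintro x ⟨f, rfl⟩
    exact DFunLike.congr_fun hmn f
  exact DFunLike.coe_injective hfun
end
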